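/- arXiv:2006.12131 — 7 statements merged into one kernel-verified Lean document; each statement's English description precedes it below -/
import Mathlib

section
/- For (a,b) ∈ ℝ², there exists t₀ ∈ ℝ with f_{a,b}(t₀) = 0 if and only if either (a ≠ 0 and b = 0) or (a ∈ (−2,0) and b² = −a² − 2a). -/
theorem roots_f_ab_real (a b : ℝ) :
    (∃ t₀ : ℝ, (a^2 + b^2)^2 * t₀^2 + 2 * (a^2 + a^3 + a * b^2 - b^2) * t₀ + (a + 1)^2 + b^2 = 0)
      ↔ (a ≠ 0 ∧ b = 0) ∨ (a ∈ Set.Ioo (-2 : ℝ) 0 ∧ b^2 = -a^2 - 2*a) := by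
  constructor
  · rintro ⟨t, ht⟩
    have key : (t*(a^2-b^2)+a+1)^2 + (2*a*b*t+b)^2 = 0 := by linear_combination ht
    have s1 : (t*(a^2-b^2)+a+1)^2 = 0 := by nlinarith [sq_nonneg (2*a*b*t+b)]
    have s2 : (2*a*b*t+b)^2 = 0 := by nlinarith [sq_nonneg (t*(a^2-b^2)+a+1)]
    have h1 : t*(a^2-b^2)+a+1 = 0 := by
      exact pow_eq_zero_iff (by norm_num) |>.mp s1
    have h2 : 2*a*b*t+b = 0 := by
      exact pow_eq_zero_iff (by norm_num) |>.mp s2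
    by_cases hb : b = 0
    · left
      refine ⟨fun ha => ?_, hb⟩
      rw [ha, hb] at h1; norm_num at h1
    · right
      have ha : a ≠ 0 := by
        rintro rfl
        apply hb; linarith [h2]
      have h2' : 2*a*t+1 = 0 := by
        rcases mul_eq_zero.mp (show b * (2*a*t+1) = 0 by linear_combination h2) with h | h
        · exact absurd h hb
        · exact h
      have hb2 : b^2 = -a^2 - 2*a := by
        linear_combination 2*a*h1 - (a^2-b^2)*h2'
      have hbpos : 0 < b^2 := by positivity
      refine ⟨⟨by nlinarith, by nlinarith⟩, hb2⟩
  · rintro (⟨ha, rfl⟩ | ⟨⟨ha1, ha2⟩, hb2⟩)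
    · refine ⟨-(a+1)/a^2, ?_⟩
      field_simp
      ring
    · have ha : a ≠ 0 := ne_of_lt ha2
      refine ⟨-1/(2*a), ?_⟩
      rw [hb2]
      field_simp
      ring
end

section
/- For (a,b) ∈ ℝ², there exists t₀ ∈ [0,1] with f_{a,b}(t₀) = 0 if and only if either (a ≤ −1 and b = 0) or (a ∈ (−2, −1/2] and b² = −a² − 2a). -/
theorem roots_f_ab_unit_interval (a b : ℝ) :
    (∃ t₀ ∈ Set.Icc (0:ℝ) 1,
        (a^2 + b^2)^2 * t₀^2 + 2 * (a^2 + a^3 + a * b^2 - b^2) * t₀ + (a + 1)^2 + b^2 = 0)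
      ↔ (a ≤ -1 ∧ b = 0) ∨ (a ∈ Set.Ioc (-2 : ℝ) (-1/2) ∧ b^2 = -a^2 - 2*a) := by
  constructor
  · rintro ⟨t, ⟨ht0, ht1⟩, h⟩
    have key : (t*(a^2-b^2)+a+1)^2 + (b*(2*a*t+1))^2 = 0 := by linear_combination h
    have h1 : t*(a^2-b^2)+a+1 = 0 := by
      nlinarith [sq_nonneg (t*(a^2-b^2)+a+1), sq_nonneg (b*(2*a*t+1))]
    have h2 : b*(2*a*t+1) = 0 := by
      nlinarith [sq_nonneg (t*(a^2-b^2)+a+1), sq_nonneg (b*(2*a*t+1))]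
    rcases eq_or_ne b 0 with hb | hb
    · left
      refine ⟨?_, hb⟩
      subst hb
      have ha : a ≠ 0 := by
        rintro rfl; simp at h1
      nlinarith [sq_nonneg a, mul_nonneg ht0 (sq_nonneg a)]
    · right
      have hat : 2*a*t+1 = 0 := (mul_eq_zero.mp h2).resolve_left hb
      have haneg : a < 0 := by nlinarith
      have ha2 : a ≤ -1/2 := by nlinarith
      have hb2 : b^2 = -a^2 - 2*a := by
        linear_combination 2*a*h1 - (a^2-b^2)*hat
      refine ⟨⟨?_, ha2⟩, hb2⟩
      nlinarith [sq_pos_of_ne_zero hb]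
  · rintro (⟨ha, rfl⟩ | ⟨⟨ha1, ha2⟩, hb2⟩)
    · have ha0 : a ≠ 0 := by intro h; rw [h] at ha; linarith
      have ha2 : (0:ℝ) < a^2 := by positivity
      refine ⟨-(a+1)/a^2, ⟨?_, ?_⟩, ?_⟩
      · apply div_nonneg _ (le_of_lt ha2); linarith
      · rw [div_le_one ha2]; nlinarith
      · field_simp
        ring
    · have haneg : a < 0 := by linarith
      have ha0 : a ≠ 0 := ne_of_lt haneg
      have h2a : 2*a < 0 := by linarith
      refine ⟨-1/(2*a), ⟨?_, ?_⟩, ?_⟩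
      · rw [le_div_iff_of_neg h2a]; linarith
      · rw [div_le_iff_of_neg h2a]; linarith
      · rw [hb2]
        field_simp
        ring
end

section
/- The set R^{MS} = {z ∈ ℂ : 2Re(z)(1 + |z|²/2) + 2(Re(z))² + |z|⁴/3 < 0} is contained in R^{Mid} = {z ∈ ℂ : |z²/2 + z + 1|² < 1}, which in turn is contained in the left half-plane {z ∈ ℂ : Re(z) < 0}. -/
open Complex

lemma abs_sq_mid (z : ℂ) : (‖z^2/2 + z + 1‖)^2 =
    ((z.re^2 - z.im^2)/2 + z.re + 1)^2 + (z.re*z.im + z.im)^2 := by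
  rw [Complex.sq_norm, Complex.normSq_apply]
  simp [pow_two, Complex.div_ofNat_re, Complex.div_ofNat_im, Complex.mul_re, Complex.mul_im]
  ring

lemma abs_sq_self (z : ℂ) : (‖z‖)^2 = z.re^2 + z.im^2 := by
  rw [Complex.sq_norm, Complex.normSq_apply]; ring

theorem RMS_subset_RMid_subset_halfplane :
    {z : ℂ | 2 * z.re * (1 + ‖z‖^2 / 2) + 2 * z.re^2 + ‖z‖^4 / 3 < 0}
      ⊆ {z : ℂ | ‖z^2 / 2 + z + 1‖^2 < 1} ∧
    {z : ℂ | ‖z^2 / 2 + z + 1‖^2 < 1} ⊆ {z : ℂ | z.re < 0} := by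
  constructor
  · intro z hz
    simp only [Set.mem_setOf_eq] at hz ⊢
    have h4 : (‖z‖)^4 = ((‖z‖)^2)^2 := by ring
    rw [abs_sq_self] at hz
    rw [h4, abs_sq_self] at hz
    rw [abs_sq_mid]
    nlinarith [sq_nonneg (z.re^2 + z.im^2), sq_nonneg z.re, sq_nonneg z.im]
  · intro z hz
    simp only [Set.mem_setOf_eq] at hz ⊢
    rw [abs_sq_mid] at hz
    by_contra h
    push_neg at h
    nlinarith [sq_nonneg (z.re^2 + z.im^2), sq_nonneg z.im, sq_nonneg z.re,
      mul_nonneg h (sq_nonneg z.im), mul_nonneg h (sq_nonneg z.re)]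
end

section
/- The real interval of mean-square stability I^{MS} = {x ∈ ℝ : 2x(1 + x²/2) + 2x² + x⁴/3 < 0} equals the open interval (x₀, 0), where x₀ = −1 − (√2 − 1)^{−1/3} + (√2 − 1)^{1/3}. Equivalently, for x < 0, the condition is x³ + 3x² + 6x + 6 > 0. -/
private lemma aux_iff : ∀ x : ℝ, x < 0 →
    (2 * x * (1 + x^2 / 2) + 2 * x^2 + x^4 / 3 < 0 ↔ x^3 + 3*x^2 + 6*x + 6 > 0) := by
  intro x hx
  constructor
  · intro h
    by_contra hle
    push_neg at hle
    nlinarith [mul_nonneg (neg_nonneg.mpr hx.le) (neg_nonneg.mpr hle)]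
  · intro h
    nlinarith [mul_pos (neg_pos.mpr hx) h]

theorem IMS_eq_Ioo :
    {x : ℝ | 2 * x * (1 + x^2 / 2) + 2 * x^2 + x^4 / 3 < 0}
      = Set.Ioo (-1 - (Real.sqrt 2 - 1) ^ (-(1:ℝ)/3) + (Real.sqrt 2 - 1) ^ ((1:ℝ)/3)) 0 ∧
    ∀ x : ℝ, x < 0 →
      (2 * x * (1 + x^2 / 2) + 2 * x^2 + x^4 / 3 < 0 ↔ x^3 + 3*x^2 + 6*x + 6 > 0) := by
  refine ⟨?_, aux_iff⟩
  set s := Real.sqrt 2 with hs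
  have hs2 : s ^ 2 = 2 := Real.sq_sqrt (by norm_num)
  have hs1 : 1 < s := by nlinarith [Real.sqrt_nonneg 2]
  have hpos : (0:ℝ) < s - 1 := by linarith
  set c := (s - 1) ^ ((1:ℝ)/3) with hc
  have hcpos : 0 < c := Real.rpow_pos_of_pos hpos _
  have hc3 : c ^ 3 = s - 1 := by
    rw [hc, ← Real.rpow_natCast ((s-1) ^ ((1:ℝ)/3)) 3, ← Real.rpow_mul hpos.le]
    norm_num
  have hneg : (s - 1) ^ (-(1:ℝ)/3) = c⁻¹ := by
    rw [show -(1:ℝ)/3 = -(1/3) by norm_num, Real.rpow_neg hpos.le, hc]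
  set x₀ : ℝ := -1 - (s - 1) ^ (-(1:ℝ)/3) + c with hx₀
  have hx₀' : x₀ = -1 - c⁻¹ + c := by rw [hx₀, hneg]
  have hcne : c ≠ 0 := ne_of_gt hcpos
  have h0 : x₀^3 + 3*x₀^2 + 6*x₀ + 6 = 0 := by
    rw [hx₀']
    have key : c^6 + 2*c^3 - 1 = 0 := by
      linear_combination (c^3 + s + 1) * hc3 + hs2
    field_simp
    linear_combination key
  ext x
  simp only [Set.mem_setOf_eq, Set.mem_Ioo]
  constructor
  · intro hx
    have hxneg : x < 0 := by nlinarith [sq_nonneg x, sq_nonneg (x+1)]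
    refine ⟨?_, hxneg⟩
    have hp : x^3 + 3*x^2 + 6*x + 6 > 0 := (aux_iff x hxneg).1 hx
    have hq : x^2 + x*x₀ + x₀^2 + 3*x + 3*x₀ + 6 > 0 := by
      nlinarith [sq_nonneg (2*x + x₀ + 3), sq_nonneg (x₀ + 1)]
    by_contra hle
    push_neg at hle
    nlinarith [mul_nonneg (sub_nonneg.mpr hle) hq.le]
  · rintro ⟨hlt, hneg'⟩
    have hq : x^2 + x*x₀ + x₀^2 + 3*x + 3*x₀ + 6 > 0 := by
      nlinarith [sq_nonneg (2*x + x₀ + 3), sq_nonneg (x₀ + 1)]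
    have hp : x^3 + 3*x^2 + 6*x + 6 > 0 := by
      nlinarith [mul_pos (sub_pos.mpr hlt) hq]
    exact (aux_iff x hneg').2 hp
end

section
/- For every b ∈ ℝ, ∫₀¹ ln(b⁴t² − 2b²t + b² + 1) dt ≥ 0. In particular, the asymptotic stability region R^{AS} of the randomized Runge–Kutta method contains no purely imaginary points. -/
open Complex

theorem arctan_le_self_of_nonneg {x : ℝ} (hx : 0 ≤ x) : Real.arctan x ≤ x := by
  have h0 : 0 ≤ Real.arctan x := Real.arctan_zero ▸ Real.arctan_strictMono.monotone hx
  have h := Real.le_tan h0 (Real.arctan_lt_pi_div_two x)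
  rwa [Real.tan_arctan] at h

theorem integral_log_f0b_nonneg (b : ℝ) :
    (0 ≤ ∫ t in (0:ℝ)..1, Real.log (b^4 * t^2 - 2 * b^2 * t + b^2 + 1)) ∧
    ¬ ((∫ t in (0:ℝ)..1,
        Real.log ‖(t:ℂ) * ((b:ℂ) * I)^2 + (b:ℂ) * I + 1‖) < 0) := by
  have hfpos : ∀ t : ℝ, 0 < b^4 * t^2 - 2 * b^2 * t + b^2 + 1 := by
    intro t
    rcases eq_or_ne b 0 with rfl | hb
    · norm_num
    · have hb2 : 0 < b^2 := by positivity
      nlinarith [sq_nonneg (b^2*t-1), hb2]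
  have hfcont : Continuous fun t : ℝ => b^4 * t^2 - 2 * b^2 * t + b^2 + 1 := by continuity
  have hlogcont : Continuous fun t : ℝ => Real.log (b^4 * t^2 - 2 * b^2 * t + b^2 + 1) :=
    hfcont.log fun t => ne_of_gt (hfpos t)
  have main : 0 ≤ ∫ t in (0:ℝ)..1, Real.log (b^4 * t^2 - 2 * b^2 * t + b^2 + 1) := by
    rcases eq_or_ne b 0 with rfl | hb
    · simp
    · set c := |b| with hc
      have hcpos : 0 < c := abs_pos.mpr hb
      have hc2 : c^2 = b^2 := sq_abs b
      set f : ℝ → ℝ := fun t => b^4 * t^2 - 2 * b^2 * t + b^2 + 1 with hf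
      have hderiv : ∀ t : ℝ, HasDerivAt (fun t => t - Real.arctan ((b^2*t - 1)/c) / c^3)
          (1 - (f t)⁻¹) t := by
        intro t
        have h1 : HasDerivAt (fun t : ℝ => (b^2*t - 1)/c) (b^2/c) t := by
          simpa using (((hasDerivAt_id t).const_mul (b^2)).sub_const 1).div_const c
        have h2 := h1.arctan
        have h3 : HasDerivAt (fun t : ℝ => t - Real.arctan ((b^2*t - 1)/c) / c^3)
            (1 - 1 / (1 + ((b^2*t - 1)/c)^2) * (b^2/c) / c^3) t :=
          (hasDerivAt_id t).sub (h2.div_const (c^3))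
        convert h3 using 1
        have hfne : f t ≠ 0 := ne_of_gt (hfpos t)
        have heq : (1 + ((b^2*t - 1)/c)^2) = f t / c^2 := by
          field_simp [hf]
          linear_combination (1 + (b^2*t-1)^2 - f t + b^2) * hc2
        rw [heq]
        field_simp
        linear_combination -hc2
      have hcont : Continuous fun t => 1 - (f t)⁻¹ :=
        continuous_const.sub (hfcont.inv₀ fun t => ne_of_gt (hfpos t))
      have key : (∫ t in (0:ℝ)..1, (1 - (f t)⁻¹)) = 1 - Real.arctan (c^3) / c^3 := by
        rw [intervalIntegral.integral_eq_sub_of_hasDerivAt (fun t _ => hderiv t)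
          (hcont.intervalIntegrable 0 1)]
        have hxy : ((b^2-1)/c) * (1/c) < 1 := by
          rw [div_mul_div_comm, mul_one, div_lt_one (by positivity)]
          nlinarith [hc2]
        have hadd := Real.arctan_add hxy
        have hnum : (b^2-1)/c + 1/c = c := by
          field_simp
          linear_combination -hc2
        have hden : 1 - ((b^2-1)/c)*(1/c) = 1/c^2 := by
          field_simp
          linear_combination hc2
        rw [hnum, hden] at hadd
        rw [show c / (1/c^2) = c^3 by field_simp] at hadd
        rw [show ((b:ℝ)^2 * 0 - 1)/c = -(1/c) by ring,
          show ((b:ℝ)^2 * 1 - 1) = b^2 - 1 by ring, Real.arctan_neg]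
        linear_combination (-(1/c^3)) * hadd
      have hle : (∫ t in (0:ℝ)..1, (1 - (f t)⁻¹)) ≤
          ∫ t in (0:ℝ)..1, Real.log (b^4 * t^2 - 2 * b^2 * t + b^2 + 1) := by
        apply intervalIntegral.integral_mono_on (by norm_num)
          (hcont.intervalIntegrable 0 1) (hlogcont.intervalIntegrable 0 1)
        intro t _
        exact Real.one_sub_inv_le_log_of_pos (hfpos t)
      have harc : Real.arctan (c^3) ≤ c^3 := arctan_le_self_of_nonneg (by positivity)
      have h0 : 0 ≤ (∫ t in (0:ℝ)..1, (1 - (f t)⁻¹)) := by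
        rw [key]
        have : Real.arctan (c^3) / c^3 ≤ 1 := by
          rw [div_le_one (by positivity)]; exact harc
        linarith
      linarith
  refine ⟨main, ?_⟩
  have habs : ∀ t : ℝ, ‖(t:ℂ) * ((b:ℂ)*I)^2 + (b:ℂ)*I + 1‖
      = Real.sqrt (b^4 * t^2 - 2 * b^2 * t + b^2 + 1) := by
    intro t
    have hz : (t:ℂ) * ((b:ℂ)*I)^2 + (b:ℂ)*I + 1
        = ((1 - b^2*t : ℝ) : ℂ) + ((b : ℝ) : ℂ) * I := by
      push_cast
      have : (I:ℂ)^2 = -1 := Complex.I_sq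
      linear_combination (t : ℂ) * (b:ℂ)^2 * this
    rw [hz, Complex.norm_add_mul_I]
    congr 1
    ring
  have heq2 : (∫ t in (0:ℝ)..1,
      Real.log ‖(t:ℂ) * ((b:ℂ) * I)^2 + (b:ℂ) * I + 1‖)
      = (1/2) * ∫ t in (0:ℝ)..1, Real.log (b^4 * t^2 - 2 * b^2 * t + b^2 + 1) := by
    rw [← intervalIntegral.integral_const_mul]
    apply intervalIntegral.integral_congr
    intro t _
    show Real.log ‖_‖ = 1/2 * Real.log _
    rw [habs t, Real.log_sqrt (hfpos t).le]
    ring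
  rw [heq2]
  push_neg
  positivity
end

section
/- Define g: (−∞,−1] → ℝ by g(x) = (x²+x+1)ln(x²+x+1) − (x+1)ln(−(x+1)) − x² for x < −1 and g(−1) = −1. Then g is convex on (−∞,−1], with g''(x) = 2ln(x²+x+1) + (2x+1)²/(x²+x+1) + 1/(−(x+1)) > 0 for x < −1, and consequently g(x) < 0 for all x ∈ [−2,−1]. -/
open Real Set Filter

noncomputable def F0 : ℝ → ℝ := fun x =>
  (x^2 + x + 1) * Real.log (x^2 + x + 1) - (x + 1) * Real.log (-(x + 1)) - x^2

noncomputable def F1 : ℝ → ℝ := fun x =>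
  (2*x + 1) * Real.log (x^2 + x + 1) - Real.log (-(x + 1))

noncomputable def F2 : ℝ → ℝ := fun x =>
  2 * Real.log (x^2 + x + 1) + (2*x + 1)^2 / (x^2 + x + 1) + 1 / (-(x + 1))

lemma Upos (x : ℝ) : 0 < x^2 + x + 1 := by nlinarith [sq_nonneg (x + 1/2)]

lemma HD1 {x : ℝ} (hx : x < -1) : HasDerivAt F0 (F1 x) x := by
  have hu : (x^2 + x + 1) ≠ 0 := (Upos x).ne'
  have hvpos : (0:ℝ) < -(x + 1) := by linarith
  have hv : -(x + 1) ≠ 0 := hvpos.ne'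
  have h1 : HasDerivAt (fun x : ℝ => x^2 + x + 1) (2*x + 1) x := by
    have := ((hasDerivAt_pow 2 x).add (hasDerivAt_id x)).add_const 1
    simpa using this
  have hlog1 : HasDerivAt (fun x : ℝ => Real.log (x^2 + x + 1)) ((2*x + 1)/(x^2 + x + 1)) x :=
    h1.log hu
  have h2 : HasDerivAt (fun x : ℝ => -(x + 1)) (-1) x := by
    exact ((hasDerivAt_id x).add_const 1).neg
  have hlog2 : HasDerivAt (fun x : ℝ => Real.log (-(x + 1))) ((-1)/(-(x + 1))) x := h2.log hv
  have h3 : HasDerivAt (fun x : ℝ => x + 1) 1 x := (hasDerivAt_id x).add_const 1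
  have hA := h1.mul hlog1
  have hB := h3.mul hlog2
  have hC : HasDerivAt (fun x : ℝ => x^2) (2*x) x := by simpa using hasDerivAt_pow 2 x
  have := (hA.sub hB).sub hC
  have e1 : (x^2+x+1) * ((2*x+1)/(x^2+x+1)) = 2*x+1 := by rw [mul_div_assoc']; exact mul_div_cancel_left₀ _ hu
  have e2 : (x+1) * ((-1)/(-(x+1))) = 1 := by
    rw [neg_div_neg_eq, mul_one_div, div_self (show x+1 ≠ 0 by intro h; rw [h] at hvpos; simp at hvpos)]
  rw [e1, e2] at this
  refine this.congr_deriv ?_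
  unfold F1
  ring

lemma HD2 {x : ℝ} (hx : x < -1) : HasDerivAt F1 (F2 x) x := by
  have hu : (x^2 + x + 1) ≠ 0 := (Upos x).ne'
  have hvpos : (0:ℝ) < -(x + 1) := by linarith
  have hv : -(x + 1) ≠ 0 := hvpos.ne'
  have h1 : HasDerivAt (fun x : ℝ => x^2 + x + 1) (2*x + 1) x := by
    have := ((hasDerivAt_pow 2 x).add (hasDerivAt_id x)).add_const 1
    simpa using this
  have hlog1 : HasDerivAt (fun x : ℝ => Real.log (x^2 + x + 1)) ((2*x + 1)/(x^2 + x + 1)) x :=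
    h1.log hu
  have h2 : HasDerivAt (fun x : ℝ => -(x + 1)) (-1) x := by
    exact ((hasDerivAt_id x).add_const 1).neg
  have hlog2 : HasDerivAt (fun x : ℝ => Real.log (-(x + 1))) ((-1)/(-(x + 1))) x := h2.log hv
  have h4 : HasDerivAt (fun x : ℝ => 2*x + 1) 2 x := by
    simpa using ((hasDerivAt_id x).const_mul 2).add_const 1
  have := (h4.mul hlog1).sub hlog2
  refine this.congr_deriv ?_
  unfold F2
  ring

lemma F2pos {x : ℝ} (hx : x < -1) : 0 < F2 x := by
  have h1 : 1 < x^2 + x + 1 := by nlinarith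
  have hlog : 0 < Real.log (x^2 + x + 1) := Real.log_pos h1
  have h2 : 0 ≤ (2*x + 1)^2 / (x^2 + x + 1) := div_nonneg (sq_nonneg _) (Upos x).le
  have h3 : 0 < 1 / (-(x + 1)) := one_div_pos.mpr (by linarith)
  unfold F2; linarith

lemma Hcont : Continuous (fun x : ℝ =>
    (x^2 + x + 1) * Real.log (x^2 + x + 1) + (-(x + 1)) * Real.log (-(x + 1)) - x^2) := by
  have c1 : Continuous fun x : ℝ => x^2 + x + 1 := by continuity
  have c2 : Continuous fun x : ℝ => -(x + 1) := by continuity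
  exact ((Real.continuous_mul_log.comp c1).add (Real.continuous_mul_log.comp c2)).sub
    (continuous_pow 2)

theorem g_convex_neg :
    let g : ℝ → ℝ := fun x =>
      if x < -1 then
        (x^2 + x + 1) * Real.log (x^2 + x + 1) - (x + 1) * Real.log (-(x + 1)) - x^2
      else -1
    ConvexOn ℝ (Set.Iic (-1 : ℝ)) g ∧
    (∀ x : ℝ, x < -1 →
      deriv (deriv g) x =
        2 * Real.log (x^2 + x + 1) + (2*x + 1)^2 / (x^2 + x + 1) + 1 / (-(x + 1)) ∧
      0 < 2 * Real.log (x^2 + x + 1) + (2*x + 1)^2 / (x^2 + x + 1) + 1 / (-(x + 1))) ∧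
    (∀ x ∈ Set.Icc (-2 : ℝ) (-1), g x < 0) := by
  intro g
  have hg : ∀ y, g y = if y < -1 then F0 y else -1 := fun y => rfl
  -- g agrees with F0 near any x < -1
  have heq : ∀ x : ℝ, x < -1 → g =ᶠ[nhds x] F0 := by
    intro x hx
    filter_upwards [IsOpen.mem_nhds isOpen_Iio hx] with y hy
    have hy' : y < -1 := hy
    rw [hg y, if_pos hy']
  have hderivg : ∀ x : ℝ, x < -1 → deriv g x = F1 x := by
    intro x hx
    rw [(heq x hx).deriv_eq]
    exact (HD1 hx).deriv
  have hderivg2 : ∀ x : ℝ, x < -1 → deriv (deriv g) x = F2 x := by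
    intro x hx
    have heq2 : deriv g =ᶠ[nhds x] F1 := by
      filter_upwards [IsOpen.mem_nhds isOpen_Iio hx] with y hy
      exact hderivg y hy
    rw [heq2.deriv_eq]
    exact (HD2 hx).deriv
  -- continuity of g on Iic (-1)
  have hcont : ContinuousOn g (Set.Iic (-1 : ℝ)) := by
    apply Hcont.continuousOn.congr
    intro y hy
    rw [hg y]
    have hy' : y ≤ -1 := hy
    rcases lt_or_eq_of_le hy' with h | h
    · rw [if_pos h]; unfold F0; ring
    · subst h
      rw [if_neg (lt_irrefl _)]
      norm_num
  have hconv : ConvexOn ℝ (Set.Iic (-1 : ℝ)) g := by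
    apply convexOn_of_deriv2_nonneg (convex_Iic _) hcont
    · rw [interior_Iic]
      intro x hx
      exact ((HD1 hx).differentiableAt.congr_of_eventuallyEq (heq x hx)).differentiableWithinAt
    · rw [interior_Iic]
      intro x hx
      have heq2 : deriv g =ᶠ[nhds x] F1 := by
        filter_upwards [IsOpen.mem_nhds isOpen_Iio hx] with y hy
        exact hderivg y hy
      exact ((HD2 hx).differentiableAt.congr_of_eventuallyEq heq2).differentiableWithinAt
    · rw [interior_Iic]
      intro x hx
      have : deriv^[2] g x = deriv (deriv g) x := by simp [Function.iterate_succ]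
      rw [this, hderivg2 x hx]
      exact (F2pos hx).le
  refine ⟨hconv, fun x hx => ⟨by rw [hderivg2 x hx]; rfl, ?_⟩, ?_⟩
  · have := F2pos hx; unfold F2 at this; exact this
  · -- negativity on Icc
    intro x hx
    obtain ⟨hx2, hx1⟩ := hx
    have hgm2 : g (-2) = 3 * Real.log 3 - 4 := by
      rw [hg (-2), if_pos (by norm_num)]
      unfold F0
      norm_num
    have hgm1 : g (-1) = -1 := by rw [hg (-1), if_neg (lt_irrefl _)]
    have hG : g (-2) < 0 := by
      rw [hgm2]
      have h3 : Real.log 3 < 4/3 := by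
        rw [Real.log_lt_iff_lt_exp (by norm_num)]
        have h1 : Real.exp (4/3) ^ (3:ℕ) = Real.exp 1 ^ (4:ℕ) := by
          rw [← Real.exp_nat_mul, ← Real.exp_nat_mul]; norm_num
        by_contra h
        push_neg at h
        have e1 : Real.exp (4/3) ^ (3:ℕ) ≤ 3^(3:ℕ) :=
          pow_le_pow_left₀ (Real.exp_pos _).le h 3
        have e2 : (2.7182818283:ℝ)^(4:ℕ) ≤ Real.exp 1 ^ (4:ℕ) :=
          pow_le_pow_left₀ (by norm_num) Real.exp_one_gt_d9.le 4
        rw [h1] at e1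
        norm_num at e1 e2
        linarith
      linarith
    set a : ℝ := -1 - x with hadef
    set b : ℝ := x + 2 with hbdef
    have ha : 0 ≤ a := by simp [hadef]; linarith
    have hb : 0 ≤ b := by simp [hbdef]; linarith
    have hab : a + b = 1 := by simp [hadef, hbdef]; ring
    have hcomb := hconv.2 (by norm_num : (-2:ℝ) ∈ Set.Iic (-1:ℝ))
      (by norm_num : (-1:ℝ) ∈ Set.Iic (-1:ℝ)) ha hb hab
    have hxeq : a • (-2:ℝ) + b • (-1:ℝ) = x := by
      simp [hadef, hbdef, smul_eq_mul]; ring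
    rw [hxeq] at hcomb
    have hM : max (g (-2)) (g (-1)) < 0 := max_lt hG (by rw [hgm1]; norm_num)
    have h1 : a • g (-2) + b • g (-1) ≤ max (g (-2)) (g (-1)) := by
      have e1 : a • g (-2) ≤ a * max (g (-2)) (g (-1)) :=
        mul_le_mul_of_nonneg_left (le_max_left _ _) ha
      have e2 : b • g (-1) ≤ b * max (g (-2)) (g (-1)) :=
        mul_le_mul_of_nonneg_left (le_max_right _ _) hb
      calc a • g (-2) + b • g (-1) ≤ a * max (g (-2)) (g (-1)) + b * max (g (-2)) (g (-1)) :=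
            add_le_add e1 e2
        _ = (a + b) * max (g (-2)) (g (-1)) := by ring
        _ = max (g (-2)) (g (-1)) := by rw [hab, one_mul]
    linarith
end

section
/- If x ∈ (−∞,−1) satisfies (x²+x+1)ln(x²+x+1) − (x+1)ln(−(x+1)) < x², then x > −√(2e). The key step is the log sum inequality: (x²+x+1)ln(x²+x+1) + (−(x+1))ln(−(x+1)) ≥ x² ln(x²/2), valid since (x²+x+1) + (−(x+1)) = x² and both summands are positive for x < −1. -/
lemma logsum (a b : ℝ) (ha : 0 < a) (hb : 0 < b) :
    (a + b) * Real.log ((a + b) / 2) ≤ a * Real.log a + b * Real.log b := by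
  have hc := Real.convexOn_mul_log.2 (Set.mem_Ici.mpr ha.le) (Set.mem_Ici.mpr hb.le)
    (by norm_num : (0:ℝ) ≤ 1/2) (by norm_num : (0:ℝ) ≤ 1/2) (by norm_num)
  simp only [smul_eq_mul] at hc
  have : (1/2 : ℝ) * a + 1/2 * b = (a + b) / 2 := by ring
  rw [this] at hc
  nlinarith [hc]

theorem IAS_lower_bound :
    (∀ x : ℝ, x < -1 →
      (x^2 + x + 1) * Real.log (x^2 + x + 1) - (x + 1) * Real.log (-(x + 1)) < x^2 →
      x > -Real.sqrt (2 * Real.exp 1)) ∧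
    (∀ x : ℝ, x < -1 →
      (x^2 + x + 1) * Real.log (x^2 + x + 1) + (-(x + 1)) * Real.log (-(x + 1))
        ≥ x^2 * Real.log (x^2 / 2)) := by
  have key : ∀ x : ℝ, x < -1 →
      (x^2 + x + 1) * Real.log (x^2 + x + 1) + (-(x + 1)) * Real.log (-(x + 1))
        ≥ x^2 * Real.log (x^2 / 2) := by
    intro x hx
    have ha : 0 < x^2 + x + 1 := by nlinarith
    have hb : 0 < -(x + 1) := by linarith
    have h := logsum (x^2 + x + 1) (-(x + 1)) ha hb
    have hs : x^2 + x + 1 + -(x + 1) = x^2 := by ring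
    rw [hs] at h
    linarith
  refine ⟨fun x hx hlt => ?_, key⟩
  have h2 := key x hx
  have hx2 : 0 < x^2 := by nlinarith
  have hlt' : x^2 * Real.log (x^2 / 2) < x^2 := by linarith
  have hlog : Real.log (x^2 / 2) < 1 := by
    by_contra h
    push_neg at h
    nlinarith
  have hlt2 : x^2 / 2 < Real.exp 1 := by
    have h3 := Real.exp_lt_exp.mpr hlog
    rwa [Real.exp_log (by nlinarith : (0:ℝ) < x^2/2)] at h3
  have hneg : -x < Real.sqrt (2 * Real.exp 1) := by
    rw [Real.lt_sqrt (by linarith [hx])]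
    nlinarith
  linarith
end
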